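/- Let (W_t)_{t≥0} be a real-valued stochastic process with E[W_t²] < ∞, E[W_t] = 0 and E[W_s W_t] = min(s, t) for all s, t ≥ 0. Then √n · Var(W̄_n) → ν₁ as n → ∞, where W̄_n = (1/(N_n − K_n + 1)) Σ_{i=0}^{N_n − K_n} (W_{(i+K_n)/n} − W_{i/n}). -/

import Mathlib

open MeasureTheory ProbabilityTheory Filter

-- product of L2 functions is integrable
lemma myIntMul {Ω : Type*} [MeasureSpace Ω] [IsProbabilityMeasure (ℙ : Measure Ω)]
    {f g : Ω → ℝ} (hf : MemLp f 2 ℙ) (hg : MemLp g 2 ℙ) :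
    Integrable (fun ω => f ω * g ω) ℙ := by
  refine (hf.integrable_sq.add hg.integrable_sq).mono'
    (hf.aestronglyMeasurable.mul hg.aestronglyMeasurable) ?_
  filter_upwards with ω
  have : |f ω * g ω| ≤ f ω ^ 2 + g ω ^ 2 := by
    rw [abs_mul]
    nlinarith [sq_nonneg (|f ω| - |g ω|), sq_abs (f ω), sq_abs (g ω), abs_nonneg (f ω),
      abs_nonneg (g ω)]
  simpa [Real.norm_eq_abs, abs_mul] using this

-- key min identity
lemma myMinId (x y k : ℝ) (hk : 0 ≤ k) :
    min (x + k) (y + k) - min (x + k) y - (min x (y + k) - min x y) = max (k - |x - y|) 0 := by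
  rcases le_total x y with h | h
  · rw [abs_of_nonpos (by linarith)]
    simp only [min_def, max_def]; split_ifs <;> linarith
  · rw [abs_of_nonneg (by linarith)]
    simp only [min_def, max_def]; split_ifs <;> linarith

noncomputable section

/-- `R M K = ∑_{d=1}^{M} (K-d)⁺` over `ℤ`. -/
def Rz (M K : ℕ) : ℤ := ∑ d ∈ Finset.range M, max ((K : ℤ) - (d + 1)) 0

lemma Rz_closed (M K : ℕ) :
    2 * Rz M K = 2 * K * min (M : ℤ) ((K : ℤ) - 1) - min (M : ℤ) ((K : ℤ) - 1) ^ 2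
      - min (M : ℤ) ((K : ℤ) - 1) := by
  induction M with
  | zero =>
    rw [Rz]
    simp only [Finset.range_zero, Finset.sum_empty, mul_zero, Nat.cast_zero]
    rcases Nat.eq_zero_or_pos K with h | h
    · subst h
      norm_num
    · have : min (0 : ℤ) ((K : ℤ) - 1) = 0 := by omega
      rw [this]; ring
  | succ M ih =>
    rw [Rz, Finset.sum_range_succ, ← Rz]
    push_cast
    rcases le_or_gt ((M : ℤ) + 1) ((K : ℤ) - 1) with h | h
    · rw [max_eq_left (by omega), min_eq_left h]
      rw [min_eq_left (by omega)] at ih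
      linear_combination ih
    · rw [max_eq_right (by omega)]
      have h1 : min ((M : ℤ) + 1) ((K : ℤ) - 1) = min (M : ℤ) ((K : ℤ) - 1) := by omega
      rw [h1]
      linear_combination ih

/-- the double sum over `ℤ`. -/
def Sz (M K : ℕ) : ℤ :=
  ∑ i ∈ Finset.range M, ∑ j ∈ Finset.range M, max ((K : ℤ) - |(i : ℤ) - (j : ℤ)|) 0

lemma Sz_border (M K : ℕ) :
    ∑ j ∈ Finset.range M, max ((K : ℤ) - |(M : ℤ) - (j : ℤ)|) 0 = Rz M K := by
  rw [Rz, ← Finset.sum_range_reflect (fun j => max ((K : ℤ) - ((j : ℤ) + 1)) 0) M]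
  refine Finset.sum_congr rfl fun j hj => ?_
  have hj' : j < M := Finset.mem_range.1 hj
  have h1 : ((M - 1 - j : ℕ) : ℤ) = (M : ℤ) - 1 - j := by omega
  have h2 : |(M : ℤ) - (j : ℤ)| = (M : ℤ) - j := abs_of_nonneg (by omega)
  rw [h2, h1]
  ring_nf

lemma Sz_closed (M K : ℕ) :
    3 * Sz M K = 3 * max (M : ℤ) (K : ℤ) * min (M : ℤ) (K : ℤ) ^ 2
      - min (M : ℤ) (K : ℤ) ^ 3 + min (M : ℤ) (K : ℤ) := by
  induction M with
  | zero =>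
    rw [Sz]
    have h : min ((0 : ℕ) : ℤ) (K : ℤ) = 0 := by simp
    simp [h]
  | succ M ih =>
    have expand : Sz (M + 1) K = Sz M K + 2 * Rz M K + (K : ℤ) := by
      rw [Sz]
      simp only [Finset.sum_range_succ]
      rw [Finset.sum_add_distrib]
      have hB1 : ∑ i ∈ Finset.range M, max ((K : ℤ) - |(i : ℤ) - (M : ℤ)|) 0 = Rz M K := by
        have := Sz_border M K
        rw [← this]
        exact Finset.sum_congr rfl fun j _ => by rw [abs_sub_comm]
      have hB2 := Sz_border M K
      rw [hB1, hB2, ← Sz]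
      have hMM : ((K : ℤ) - |(M : ℤ) - (M : ℤ)|) = K := by simp
      rw [hMM, max_eq_left (by positivity)]
      ring
    rw [expand, mul_add, mul_add, ih, Rz_closed]
    rcases le_or_gt ((M : ℤ) + 1) (K : ℤ) with h | h
    · have e1 : min (((M + 1 : ℕ)) : ℤ) (K : ℤ) = (M : ℤ) + 1 := by push_cast; omega
      have e2 : max (((M + 1 : ℕ)) : ℤ) (K : ℤ) = (K : ℤ) := by push_cast; omega
      have e3 : min ((M : ℕ) : ℤ) (K : ℤ) = (M : ℤ) := by omega
      have e4 : max ((M : ℕ) : ℤ) (K : ℤ) = (K : ℤ) := by omega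
      have e5 : min ((M : ℕ) : ℤ) ((K : ℤ) - 1) = (M : ℤ) := by omega
      rw [e1, e2, e3, e4, e5]
      ring
    · have e1 : min (((M + 1 : ℕ)) : ℤ) (K : ℤ) = (K : ℤ) := by push_cast; omega
      have e2 : max (((M + 1 : ℕ)) : ℤ) (K : ℤ) = (M : ℤ) + 1 := by push_cast; omega
      have e3 : min ((M : ℕ) : ℤ) (K : ℤ) = (K : ℤ) := by omega
      have e4 : max ((M : ℕ) : ℤ) (K : ℤ) = (M : ℤ) := by omega
      have e5 : min ((M : ℕ) : ℤ) ((K : ℤ) - 1) = (K : ℤ) - 1 := by omega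
      rw [e1, e2, e3, e4, e5]
      ring

end

/-- `K_n = ⌈c₁ √n⌉`. -/
noncomputable def Kn (c₁ : ℝ) (n : ℕ) : ℕ := ⌈c₁ * Real.sqrt n⌉₊

/-- `N_n = ⌈c₁ c₂ √n⌉`. -/
noncomputable def Nn (c₁ c₂ : ℝ) (n : ℕ) : ℕ := ⌈c₁ * c₂ * Real.sqrt n⌉₊

/-- `ν₁ = c₁ (3c₂ - 4 + max((2 - c₂)³, 0)) / (3(c₂ - 1)²)`. -/
noncomputable def nu₁ (c₁ c₂ : ℝ) : ℝ :=
  c₁ * (3 * c₂ - 4 + max ((2 - c₂) ^ 3) 0) / (3 * (c₂ - 1) ^ 2)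

/-- The block average of increments of the process `W`,
`W̄_n = (N_n - K_n + 1)⁻¹ ∑_{i=0}^{N_n - K_n} (W_{(i+K_n)/n} - W_{i/n})`. -/
noncomputable def Wbar {Ω : Type*} (c₁ c₂ : ℝ) (W : ℝ → Ω → ℝ) (n : ℕ) (ω : Ω) : ℝ :=
  ((Nn c₁ c₂ n - Kn c₁ n + 1 : ℕ) : ℝ)⁻¹ *
    ∑ i ∈ Finset.range (Nn c₁ c₂ n - Kn c₁ n + 1),
      (W (((i + Kn c₁ n : ℕ) : ℝ) / n) ω - W ((i : ℝ) / n) ω)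

lemma var_formula {Ω : Type*} [MeasureSpace Ω] [IsProbabilityMeasure (ℙ : Measure Ω)]
    (c₁ c₂ : ℝ)
    (W : ℝ → Ω → ℝ)
    (hWL2 : ∀ t : ℝ, 0 ≤ t → MemLp (W t) 2 ℙ)
    (hWmean : ∀ t : ℝ, 0 ≤ t → ∫ ω, W t ω ∂ℙ = 0)
    (hWcov : ∀ s t : ℝ, 0 ≤ s → 0 ≤ t → ∫ ω, W s ω * W t ω ∂ℙ = min s t)
    (n : ℕ) (hn : 1 ≤ n) :
    variance (Wbar c₁ c₂ W n) ℙ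
      = ((Nn c₁ c₂ n - Kn c₁ n + 1 : ℕ) : ℝ)⁻¹ ^ 2
        * ((Sz (Nn c₁ c₂ n - Kn c₁ n + 1) (Kn c₁ n) : ℝ) / n) := by
  set K := Kn c₁ n with hKdef
  set M := Nn c₁ c₂ n - Kn c₁ n + 1 with hMdef
  have hn0 : (0 : ℝ) < n := by exact_mod_cast hn
  set X : ℕ → Ω → ℝ := fun i ω => W (((i + K : ℕ) : ℝ) / n) ω - W ((i : ℝ) / n) ω with hXdef
  have ht : ∀ i : ℕ, (0 : ℝ) ≤ (i : ℝ) / n := fun i => by positivity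
  have hX2 : ∀ i, MemLp (X i) 2 ℙ := fun i =>
    ((hWL2 _ (ht (i + K))).sub (hWL2 _ (ht i)))
  have hXint : ∀ i, Integrable (X i) ℙ := fun i => (hX2 i).integrable one_le_two
  have hWbar_eq : Wbar c₁ c₂ W n = fun ω => ((M : ℕ) : ℝ)⁻¹ * ∑ i ∈ Finset.range M, X i ω := rfl
  have hsum : MemLp (fun ω => ∑ i ∈ Finset.range M, X i ω) 2 ℙ := by
    have h := memLp_finset_sum' (Finset.range M) fun i (_ : i ∈ Finset.range M) => hX2 i
    convert h using 1
    exact funext fun ω => (Finset.sum_apply ω (Finset.range M) X).symm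
  have hWb2 : MemLp (Wbar c₁ c₂ W n) 2 ℙ := by
    rw [hWbar_eq]; exact hsum.const_mul _
  rw [variance_eq_sub hWb2]
  have hmean : ∫ ω, Wbar c₁ c₂ W n ω ∂ℙ = 0 := by
    rw [hWbar_eq]
    rw [integral_const_mul, integral_finset_sum _ fun i _ => hXint i]
    have : ∀ i ∈ Finset.range M, ∫ ω, X i ω ∂ℙ = 0 := fun i _ => by
      rw [hXdef]
      simp only []
      rw [integral_sub ((hWL2 _ (ht (i + K))).integrable one_le_two)
        ((hWL2 _ (ht i)).integrable one_le_two), hWmean _ (ht (i + K)), hWmean _ (ht i), sub_zero]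
    rw [Finset.sum_congr rfl this]
    simp
  have hcov : ∀ i j : ℕ, ∫ ω, X i ω * X j ω ∂ℙ = max ((K : ℝ) - |(i : ℝ) - (j : ℝ)|) 0 / n := by
    intro i j
    have expand : ∀ ω, X i ω * X j ω
        = W (((i + K : ℕ) : ℝ) / n) ω * W (((j + K : ℕ) : ℝ) / n) ω
          - W (((i + K : ℕ) : ℝ) / n) ω * W ((j : ℝ) / n) ω
          - (W ((i : ℝ) / n) ω * W (((j + K : ℕ) : ℝ) / n) ω
            - W ((i : ℝ) / n) ω * W ((j : ℝ) / n) ω) := fun ω => by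
      simp only [hXdef]; ring
    rw [integral_congr_ae (Filter.Eventually.of_forall expand)]
    have I1 : Integrable (fun ω => W (((i + K : ℕ) : ℝ) / n) ω * W (((j + K : ℕ) : ℝ) / n) ω) ℙ :=
      myIntMul (hWL2 _ (ht _)) (hWL2 _ (ht _))
    have I2 : Integrable (fun ω => W (((i + K : ℕ) : ℝ) / n) ω * W ((j : ℝ) / n) ω) ℙ :=
      myIntMul (hWL2 _ (ht _)) (hWL2 _ (ht _))
    have I3 : Integrable (fun ω => W ((i : ℝ) / n) ω * W (((j + K : ℕ) : ℝ) / n) ω) ℙ :=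
      myIntMul (hWL2 _ (ht _)) (hWL2 _ (ht _))
    have I4 : Integrable (fun ω => W ((i : ℝ) / n) ω * W ((j : ℝ) / n) ω) ℙ :=
      myIntMul (hWL2 _ (ht _)) (hWL2 _ (ht _))
    have I5 : Integrable (fun ω => W (((i + K : ℕ) : ℝ) / n) ω * W (((j + K : ℕ) : ℝ) / n) ω
        - W (((i + K : ℕ) : ℝ) / n) ω * W ((j : ℝ) / n) ω) ℙ := I1.sub I2
    have I6 : Integrable (fun ω => W ((i : ℝ) / n) ω * W (((j + K : ℕ) : ℝ) / n) ω
        - W ((i : ℝ) / n) ω * W ((j : ℝ) / n) ω) ℙ := I3.sub I4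
    rw [integral_sub I5 I6, integral_sub I1 I2, integral_sub I3 I4]
    rw [hWcov _ _ (ht _) (ht _), hWcov _ _ (ht _) (ht _), hWcov _ _ (ht _) (ht _),
      hWcov _ _ (ht _) (ht _)]
    have hik : ((i + K : ℕ) : ℝ) / n = (i : ℝ) / n + (K : ℝ) / n := by push_cast; ring
    have hjk : ((j + K : ℕ) : ℝ) / n = (j : ℝ) / n + (K : ℝ) / n := by push_cast; ring
    rw [hik, hjk]
    rw [myMinId ((i : ℝ) / n) ((j : ℝ) / n) ((K : ℝ) / n) (by positivity)]
    have habs : |(i : ℝ) / n - (j : ℝ) / n| = |(i : ℝ) - (j : ℝ)| / n := by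
      rw [div_sub_div_same, abs_div, abs_of_pos hn0]
    rw [habs]
    rw [show ((K : ℝ) / n - |(i : ℝ) - (j : ℝ)| / n) = ((K : ℝ) - |(i : ℝ) - (j : ℝ)|) / n by ring,
      show (0 : ℝ) = 0 / (n : ℝ) by simp, max_div_div_right hn0.le]
    simp
  have hsq : ∀ ω, (Wbar c₁ c₂ W n ω) ^ 2
      = ((M : ℕ) : ℝ)⁻¹ ^ 2 * ∑ i ∈ Finset.range M, ∑ j ∈ Finset.range M, X i ω * X j ω := by
    intro ω
    rw [hWbar_eq]
    simp only []
    rw [mul_pow, sq ((M : ℕ) : ℝ)⁻¹, sq, Finset.sum_mul_sum]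
  rw [hmean]
  have hI2 : ∫ ω, (Wbar c₁ c₂ W n ω) ^ 2 ∂ℙ
      = ((M : ℕ) : ℝ)⁻¹ ^ 2 * ∑ i ∈ Finset.range M, ∑ j ∈ Finset.range M,
          (max ((K : ℝ) - |(i : ℝ) - (j : ℝ)|) 0 / n) := by
    rw [integral_congr_ae (Filter.Eventually.of_forall hsq), integral_const_mul]
    congr 1
    rw [integral_finset_sum _ fun i _ =>
      integrable_finset_sum _ fun j _ => myIntMul (hX2 i) (hX2 j)]
    refine Finset.sum_congr rfl fun i _ => ?_
    rw [integral_finset_sum _ fun j _ => myIntMul (hX2 i) (hX2 j)]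
    exact Finset.sum_congr rfl fun j _ => hcov i j
  have hSz : ((Sz M K : ℤ) : ℝ) = ∑ i ∈ Finset.range M, ∑ j ∈ Finset.range M,
      max ((K : ℝ) - |(i : ℝ) - (j : ℝ)|) 0 := by
    rw [Sz]
    push_cast
    rfl
  simp only [Pi.pow_apply]
  rw [hI2, hSz]
  simp [Finset.sum_div]

lemma sqrt_nat_tendsto : Tendsto (fun n : ℕ => Real.sqrt n) atTop atTop := by
  refine tendsto_atTop_atTop.2 fun b => ⟨⌈b ^ 2⌉₊, fun x hx => ?_⟩
  have h1 : (b ^ 2 : ℝ) ≤ x := le_trans (Nat.le_ceil _) (by exact_mod_cast hx)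
  calc b ≤ |b| := le_abs_self b
    _ = Real.sqrt (b ^ 2) := (Real.sqrt_sq_eq_abs b).symm
    _ ≤ Real.sqrt x := Real.sqrt_le_sqrt h1

lemma inv_sqrt_tendsto : Tendsto (fun n : ℕ => (Real.sqrt n)⁻¹) atTop (nhds 0) :=
  sqrt_nat_tendsto.inv_tendsto_atTop

lemma ceil_div_sqrt_tendsto (c : ℝ) (hc : 0 ≤ c) :
    Tendsto (fun n : ℕ => ((⌈c * Real.sqrt n⌉₊ : ℕ) : ℝ) / Real.sqrt n) atTop (nhds c) := by
  have h1 : Tendsto (fun n : ℕ => c + (Real.sqrt n)⁻¹) atTop (nhds c) := by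
    have := tendsto_const_nhds (x := c) (f := atTop (α := ℕ)) |>.add inv_sqrt_tendsto
    simpa using this
  refine tendsto_of_tendsto_of_tendsto_of_le_of_le' tendsto_const_nhds h1 ?_ ?_
  · filter_upwards [eventually_ge_atTop 1] with n hn
    have hs : (0 : ℝ) < Real.sqrt n := Real.sqrt_pos.2 (by exact_mod_cast hn)
    rw [le_div_iff₀ hs]
    exact Nat.le_ceil _
  · filter_upwards [eventually_ge_atTop 1] with n hn
    have hs : (0 : ℝ) < Real.sqrt n := Real.sqrt_pos.2 (by exact_mod_cast hn)
    rw [div_le_iff₀ hs, add_mul, inv_mul_cancel₀ hs.ne']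
    exact le_of_lt (Nat.ceil_lt_add_one (by positivity))

/-- For a centered, square-integrable process `W` with covariance
`E[W_s W_t] = min(s,t)`, one has `√n · Var(W̄_n) → ν₁`. -/
theorem sqrt_n_mul_variance_Wbar_tendsto
    {Ω : Type*} [MeasureSpace Ω] [IsProbabilityMeasure (ℙ : Measure Ω)]
    (c₁ c₂ : ℝ) (hc₁ : 0 < c₁) (hc₂ : 1 < c₂)
    (W : ℝ → Ω → ℝ)
    (hWL2 : ∀ t : ℝ, 0 ≤ t → MemLp (W t) 2 ℙ)
    (hWmean : ∀ t : ℝ, 0 ≤ t → ∫ ω, W t ω ∂ℙ = 0)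
    (hWcov : ∀ s t : ℝ, 0 ≤ s → 0 ≤ t → ∫ ω, W s ω * W t ω ∂ℙ = min s t) :
    Tendsto (fun n : ℕ => Real.sqrt n * variance (Wbar c₁ c₂ W n) ℙ)
      atTop (nhds (nu₁ c₁ c₂)) := by
  have hc₂1 : (0 : ℝ) < c₂ - 1 := by linarith
  set μ : ℝ := c₁ * (c₂ - 1) with hμdef
  have hμ : 0 < μ := by positivity
  -- basic limits
  have hK : Tendsto (fun n : ℕ => ((Kn c₁ n : ℕ) : ℝ) / Real.sqrt n) atTop (nhds c₁) :=
    ceil_div_sqrt_tendsto c₁ hc₁.le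
  have hN : Tendsto (fun n : ℕ => ((Nn c₁ c₂ n : ℕ) : ℝ) / Real.sqrt n) atTop (nhds (c₁ * c₂)) :=
    ceil_div_sqrt_tendsto (c₁ * c₂) (by positivity)
  have hKN : ∀ n : ℕ, Kn c₁ n ≤ Nn c₁ c₂ n := fun n =>
    Nat.ceil_le_ceil (by nlinarith [Real.sqrt_nonneg (n : ℝ)])
  have hMcast : ∀ n : ℕ, ((Nn c₁ c₂ n - Kn c₁ n + 1 : ℕ) : ℝ)
      = ((Nn c₁ c₂ n : ℕ) : ℝ) - ((Kn c₁ n : ℕ) : ℝ) + 1 := fun n => by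
    push_cast [hKN n]; ring
  have hM : Tendsto (fun n : ℕ => ((Nn c₁ c₂ n - Kn c₁ n + 1 : ℕ) : ℝ) / Real.sqrt n)
      atTop (nhds μ) := by
    have h := (hN.sub hK).add inv_sqrt_tendsto
    have heq : ∀ n : ℕ, ((Nn c₁ c₂ n : ℕ) : ℝ) / Real.sqrt n - ((Kn c₁ n : ℕ) : ℝ) / Real.sqrt n
        + (Real.sqrt n)⁻¹ = ((Nn c₁ c₂ n - Kn c₁ n + 1 : ℕ) : ℝ) / Real.sqrt n := fun n => by
      rw [hMcast n]
      rcases eq_or_ne (Real.sqrt n) 0 with h0 | h0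
      · simp [h0]
      · field_simp
    have hlim : c₁ * c₂ - c₁ + 0 = μ := by rw [hμdef]; ring
    rw [← hlim]
    exact h.congr heq
  have hmin : Tendsto (fun n : ℕ =>
      (min ((Nn c₁ c₂ n - Kn c₁ n + 1 : ℕ) : ℝ) ((Kn c₁ n : ℕ) : ℝ)) / Real.sqrt n)
      atTop (nhds (min μ c₁)) := by
    have := hM.min hK
    refine this.congr fun n => ?_
    rw [min_div_div_right (Real.sqrt_nonneg _)]
  have hmax : Tendsto (fun n : ℕ =>
      (max ((Nn c₁ c₂ n - Kn c₁ n + 1 : ℕ) : ℝ) ((Kn c₁ n : ℕ) : ℝ)) / Real.sqrt n)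
      atTop (nhds (max μ c₁)) := by
    have := hM.max hK
    refine this.congr fun n => ?_
    rw [max_div_div_right (Real.sqrt_nonneg _)]
  -- the limit of the normalized expression
  set L : ℝ := (μ⁻¹) ^ 2 * (max μ c₁ * min μ c₁ ^ 2 - (min μ c₁ ^ 3 - min μ c₁ * 0) / 3) with hLdef
  have hF : Tendsto (fun n : ℕ =>
      ((((Nn c₁ c₂ n - Kn c₁ n + 1 : ℕ) : ℝ) / Real.sqrt n)⁻¹) ^ 2
        * ((max ((Nn c₁ c₂ n - Kn c₁ n + 1 : ℕ) : ℝ) ((Kn c₁ n : ℕ) : ℝ)) / Real.sqrt n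
            * ((min ((Nn c₁ c₂ n - Kn c₁ n + 1 : ℕ) : ℝ) ((Kn c₁ n : ℕ) : ℝ)) / Real.sqrt n) ^ 2
          - (((min ((Nn c₁ c₂ n - Kn c₁ n + 1 : ℕ) : ℝ) ((Kn c₁ n : ℕ) : ℝ)) / Real.sqrt n) ^ 3
            - ((min ((Nn c₁ c₂ n - Kn c₁ n + 1 : ℕ) : ℝ) ((Kn c₁ n : ℕ) : ℝ)) / Real.sqrt n)
              * ((n : ℝ))⁻¹) / 3)) atTop (nhds L) := by
    exact ((hM.inv₀ hμ.ne').pow 2).mul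
      ((hmax.mul (hmin.pow 2)).sub
        (((hmin.pow 3).sub (hmin.mul tendsto_inv_atTop_nhds_zero_nat)).div_const 3))
  -- eventual equality
  have hev : ∀ᶠ n : ℕ in atTop, Real.sqrt n * variance (Wbar c₁ c₂ W n) ℙ
      = ((((Nn c₁ c₂ n - Kn c₁ n + 1 : ℕ) : ℝ) / Real.sqrt n)⁻¹) ^ 2
        * ((max ((Nn c₁ c₂ n - Kn c₁ n + 1 : ℕ) : ℝ) ((Kn c₁ n : ℕ) : ℝ)) / Real.sqrt n
            * ((min ((Nn c₁ c₂ n - Kn c₁ n + 1 : ℕ) : ℝ) ((Kn c₁ n : ℕ) : ℝ)) / Real.sqrt n) ^ 2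
          - (((min ((Nn c₁ c₂ n - Kn c₁ n + 1 : ℕ) : ℝ) ((Kn c₁ n : ℕ) : ℝ)) / Real.sqrt n) ^ 3
            - ((min ((Nn c₁ c₂ n - Kn c₁ n + 1 : ℕ) : ℝ) ((Kn c₁ n : ℕ) : ℝ)) / Real.sqrt n)
              * ((n : ℝ))⁻¹) / 3) := by
    filter_upwards [eventually_ge_atTop 1] with n hn
    rw [var_formula c₁ c₂ W hWL2 hWmean hWcov n hn]
    set Kk := Kn c₁ n with hKk
    set Mn := Nn c₁ c₂ n - Kn c₁ n + 1 with hMn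
    have hM1 : 1 ≤ Mn := Nat.le_add_left 1 _
    clear_value Mn
    clear_value Kk
    have hMpos : (0 : ℝ) < ((Mn : ℕ) : ℝ) := by exact_mod_cast hM1
    have hs : (0 : ℝ) < Real.sqrt n := Real.sqrt_pos.2 (by exact_mod_cast hn)
    have hnn : ((n : ℝ)) = Real.sqrt n ^ 2 := (Real.sq_sqrt (by positivity)).symm
    have hSzr : ((Sz Mn Kk : ℤ) : ℝ)
        = max ((Mn : ℕ) : ℝ) ((Kk : ℕ) : ℝ) * min ((Mn : ℕ) : ℝ) ((Kk : ℕ) : ℝ) ^ 2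
          - (min ((Mn : ℕ) : ℝ) ((Kk : ℕ) : ℝ) ^ 3
            - min ((Mn : ℕ) : ℝ) ((Kk : ℕ) : ℝ)) / 3 := by
      have h3 := Sz_closed Mn Kk
      have h4 := congrArg (fun z : ℤ => (z : ℝ)) h3
      push_cast at h4
      linarith
    set s := Real.sqrt n with hsdef
    have hnn' : ((n : ℕ) : ℝ) = s ^ 2 := hnn
    clear_value s
    rw [hSzr, hnn']
    field_simp
  -- identify the limit value
  have hLnu : L = nu₁ c₁ c₂ := by
    rw [hLdef, nu₁, hμdef]
    rcases le_total c₂ 2 with h2 | h2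
    · have hle : c₁ * (c₂ - 1) ≤ c₁ := by nlinarith
      have hminv : min (c₁ * (c₂ - 1)) c₁ = c₁ * (c₂ - 1) := min_eq_left hle
      have hmaxv : max (c₁ * (c₂ - 1)) c₁ = c₁ := max_eq_right hle
      have hcube : max ((2 - c₂) ^ 3) 0 = (2 - c₂) ^ 3 :=
        max_eq_left (pow_nonneg (by linarith) 3)
      rw [hminv, hmaxv, hcube]
      field_simp
      ring
    · have hle : c₁ ≤ c₁ * (c₂ - 1) := by nlinarith
      have hminv : min (c₁ * (c₂ - 1)) c₁ = c₁ := min_eq_right hle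
      have hmaxv : max (c₁ * (c₂ - 1)) c₁ = c₁ * (c₂ - 1) := max_eq_left hle
      have hcube : max ((2 - c₂) ^ 3) 0 = 0 := by
        have h0 : (2 - c₂) ^ 3 ≤ 0 := by nlinarith [sq_nonneg (2 - c₂)]
        exact max_eq_right h0
      rw [hminv, hmaxv, hcube]
      field_simp
      ring
  rw [← hLnu]
  exact hF.congr' (EventuallyEq.symm hev)
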